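/- arXiv:1912.07292 — 5 statements merged into one kernel-verified Lean document; each statement's English description precedes it below -/
import Mathlib

section
/- Let p1, p2 ∈ (1,∞) and let μ be the measure on [-1,1] with density f(x) = C x^{-1/p1} for 0 < x ≤ 1 and f(x) = C(-x)^{1/p2} for -1 ≤ x ≤ 0 (C > 0 a normalizing constant). Then there is a constant c > 0 such that for all sufficiently small R > 0 and r ∈ (0, R/2), μ(B(-r, R)) / μ(B(-r, r)) ≥ c · R^{1 - 1/p1} / r^{1 + 1/p2}. -/
open MeasureTheory Set ENNReal

/-- For the measure with density `f(x) = C x^{-1/p1}` on `(0,1]` and `C(-x)^{1/p2}` on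
`[-1,0]`, the ratio of the measures of balls centred at `-r` of radii `R` and `r` is at
least `c · R^{1-1/p1} / r^{1+1/p2}`. -/
theorem sharp_example_assouad_lower_bound (p1 p2 : ℝ) (hp1 : 1 < p1) (hp2 : 1 < p2)
    (C : ℝ) (hC : 0 < C)
    (f : ℝ → ℝ)
    (hf_pos : ∀ x : ℝ, 0 < x → x ≤ 1 → f x = C * x ^ (-(1 / p1)))
    (hf_neg : ∀ x : ℝ, -1 ≤ x → x ≤ 0 → f x = C * (-x) ^ (1 / p2)) :
    ∃ c : ℝ, 0 < c ∧ ∃ R0 : ℝ, 0 < R0 ∧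
      ∀ R : ℝ, 0 < R → R < R0 → ∀ r : ℝ, 0 < r → r < R / 2 →
        ENNReal.ofReal (c * R ^ (1 - 1 / p1) / r ^ (1 + 1 / p2)) ≤
          (∫⁻ y in Ioo (-r - R) (-r + R) ∩ Icc (-1:ℝ) 1, ENNReal.ofReal (f y)) /
            (∫⁻ y in Ioo (-r - r) (-r + r) ∩ Icc (-1:ℝ) 1, ENNReal.ofReal (f y)) := by
  refine ⟨1/16, by norm_num, 1, one_pos, ?_⟩
  intro R hR hR1 r hr hrR
  have hp1' : (0:ℝ) < p1 := lt_trans one_pos hp1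
  have hp2' : (0:ℝ) < p2 := lt_trans one_pos hp2
  have hrR' : r < R := by linarith
  have hA : (0:ℝ) < R ^ (-(1/p1)) := Real.rpow_pos_of_pos hR _
  have hB : (0:ℝ) < r ^ (1/p2) := Real.rpow_pos_of_pos hr _
  have ht0 : (0:ℝ) < (2:ℝ) ^ (1/p2) := Real.rpow_pos_of_pos two_pos _
  have ht : (2:ℝ) ^ (1/p2) ≤ 2 := by
    calc (2:ℝ) ^ (1/p2) ≤ (2:ℝ) ^ (1:ℝ) :=
          Real.rpow_le_rpow_of_exponent_le one_le_two
            (by rw [div_le_one hp2']; linarith)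
      _ = 2 := Real.rpow_one 2
  -- numerator lower bound
  have hsub : Ioo (0:ℝ) (R - r) ⊆ Ioo (-r - R) (-r + R) ∩ Icc (-1:ℝ) 1 := by
    intro y hy
    obtain ⟨hy1, hy2⟩ := hy
    exact ⟨⟨by linarith, by linarith⟩, by constructor <;> linarith⟩
  have hNlb : ENNReal.ofReal (C * R ^ (-(1/p1))) * ENNReal.ofReal (R - r) ≤
      ∫⁻ y in Ioo (-r - R) (-r + R) ∩ Icc (-1:ℝ) 1, ENNReal.ofReal (f y) := by
    have h1 : ∫⁻ y in Ioo (0:ℝ) (R - r), ENNReal.ofReal (f y) ≤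
        ∫⁻ y in Ioo (-r - R) (-r + R) ∩ Icc (-1:ℝ) 1, ENNReal.ofReal (f y) :=
      lintegral_mono_set hsub
    refine le_trans ?_ h1
    have h2 : (∫⁻ _ in Ioo (0:ℝ) (R - r), ENNReal.ofReal (C * R ^ (-(1/p1)))) ≤
        ∫⁻ y in Ioo (0:ℝ) (R - r), ENNReal.ofReal (f y) := by
      refine setLIntegral_mono' measurableSet_Ioo fun y hy => ?_
      obtain ⟨hy1, hy2⟩ := hy
      rw [hf_pos y hy1 (by linarith)]
      refine ENNReal.ofReal_le_ofReal ?_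
      have : R ^ (-(1/p1)) ≤ y ^ (-(1/p1)) :=
        Real.rpow_le_rpow_of_nonpos hy1 (by linarith)
          (neg_nonpos.mpr (by positivity))
      nlinarith
    refine le_trans (le_of_eq ?_) h2
    rw [setLIntegral_const, Real.volume_Ioo, sub_zero]
  -- denominator upper bound
  have hDub : (∫⁻ y in Ioo (-r - r) (-r + r) ∩ Icc (-1:ℝ) 1, ENNReal.ofReal (f y)) ≤
      ENNReal.ofReal (C * (2*r) ^ (1/p2)) * ENNReal.ofReal (2*r) := by
    have h2 : (∫⁻ y in Ioo (-r - r) (-r + r) ∩ Icc (-1:ℝ) 1, ENNReal.ofReal (f y)) ≤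
        ∫⁻ _ in Ioo (-r - r) (-r + r) ∩ Icc (-1:ℝ) 1,
          ENNReal.ofReal (C * (2*r) ^ (1/p2)) := by
      refine setLIntegral_mono' (measurableSet_Ioo.inter measurableSet_Icc)
        fun y hy => ?_
      obtain ⟨⟨hy1, hy2⟩, hy3, hy4⟩ := hy
      rw [hf_neg y hy3 (by linarith)]
      refine ENNReal.ofReal_le_ofReal ?_
      have h5 : (-y) ^ (1/p2) ≤ (2*r) ^ (1/p2) :=
        Real.rpow_le_rpow (by linarith) (by linarith) (by positivity)
      nlinarith
    refine h2.trans ?_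
    rw [setLIntegral_const]
    refine mul_le_mul_right ?_ _
    calc volume (Ioo (-r - r) (-r + r) ∩ Icc (-1:ℝ) 1)
        ≤ volume (Ioo (-r - r) (-r + r)) := measure_mono inter_subset_left
      _ = ENNReal.ofReal (2*r) := by rw [Real.volume_Ioo]; ring_nf
  -- combine
  have hpos : (0:ℝ) < C * (2*r) ^ (1/p2) * (2*r) := by positivity
  calc ENNReal.ofReal (1/16 * R ^ (1 - 1/p1) / r ^ (1 + 1/p2))
      ≤ ENNReal.ofReal ((C * R ^ (-(1/p1)) * (R - r)) / (C * (2*r) ^ (1/p2) * (2*r))) := by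
        refine ENNReal.ofReal_le_ofReal ?_
        have e1 : R ^ (1 - 1/p1) = R * R ^ (-(1/p1)) := by
          rw [show (1 - 1/p1) = 1 + -(1/p1) by ring, Real.rpow_add hR, Real.rpow_one]
        have e2 : r ^ (1 + 1/p2) = r * r ^ (1/p2) := by
          rw [Real.rpow_add hr, Real.rpow_one]
        have e3 : (2*r) ^ (1/p2) = 2 ^ (1/p2) * r ^ (1/p2) :=
          Real.mul_rpow (by norm_num) hr.le
        rw [e1, e2, e3, div_le_div_iff₀ (by positivity) (by positivity)]
        have key : R * (2:ℝ) ^ (1/p2) / 8 ≤ R - r := by nlinarith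
        nlinarith [mul_pos (mul_pos hC hA) (mul_pos hB hr),
          mul_pos (mul_pos (mul_pos hC hA) (mul_pos hB hr)) hr,
          mul_le_mul_of_nonneg_left key
            (le_of_lt (mul_pos (mul_pos hC hA) (mul_pos hB hr)))]
    _ = ENNReal.ofReal (C * R ^ (-(1/p1)) * (R - r)) /
          ENNReal.ofReal (C * (2*r) ^ (1/p2) * (2*r)) :=
        ENNReal.ofReal_div_of_pos hpos
    _ = (ENNReal.ofReal (C * R ^ (-(1/p1))) * ENNReal.ofReal (R - r)) /
          (ENNReal.ofReal (C * (2*r) ^ (1/p2)) * ENNReal.ofReal (2*r)) := by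
        rw [← ENNReal.ofReal_mul (by positivity), ← ENNReal.ofReal_mul (by positivity)]
    _ ≤ _ := ENNReal.div_le_div hNlb hDub
end

section
/- The measure μ on [-1,1] with density f(x) = C x^{-1/p1} (0 < x ≤ 1), f(x) = C(-x)^{1/p2} (-1 ≤ x ≤ 0), for p1, p2 ∈ (1,∞), is not doubling: for every constant K there exist x in the support of μ and 0 < r < R with μ(B(x,R)) > K (R/r) μ(B(x,r)). -/
open MeasureTheory Set ENNReal

/-- The measure with density `f(x) = C x^{-1/p1}` on `(0,1]` and `C(-x)^{1/p2}` on
`[-1,0]` is not doubling: for every `K` there are `x` in the support and `0 < r < R` with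
`μ(B(x,R)) > K (R/r) μ(B(x,r))`. -/
theorem sharp_example_not_doubling (p1 p2 : ℝ) (hp1 : 1 < p1) (hp2 : 1 < p2)
    (C : ℝ) (hC : 0 < C)
    (f : ℝ → ℝ)
    (hf_pos : ∀ x : ℝ, 0 < x → x ≤ 1 → f x = C * x ^ (-(1 / p1)))
    (hf_neg : ∀ x : ℝ, -1 ≤ x → x ≤ 0 → f x = C * (-x) ^ (1 / p2)) :
    ∀ K : ℝ, ∃ x ∈ Icc (-1:ℝ) 1, ∃ r R : ℝ, 0 < r ∧ r < R ∧
      ENNReal.ofReal (K * (R / r)) *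
          (∫⁻ y in Ioo (x - r) (x + r) ∩ Icc (-1:ℝ) 1, ENNReal.ofReal (f y)) <
        ∫⁻ y in Ioo (x - R) (x + R) ∩ Icc (-1:ℝ) 1, ENNReal.ofReal (f y) := by
  intro K
  set K' : ℝ := max K 1 with hK'def
  have hK1 : 1 ≤ K' := le_max_right _ _
  have hK0 : (0:ℝ) < K' := lt_of_lt_of_le one_pos hK1
  set ε : ℝ := 1 / (4 * K') with hεdef
  have hε0 : 0 < ε := by positivity
  set δ : ℝ := min (1/3) ((ε/2) ^ p2 / 2) with hδdef
  have hδ0 : 0 < δ := lt_min (by norm_num) (by positivity)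
  have hδ3 : δ ≤ 1/3 := min_le_left _ _
  have hδ1 : δ ≤ 1 := hδ3.trans (by norm_num)
  refine ⟨-δ, ⟨by linarith, by linarith⟩, δ, 2*δ, hδ0, by linarith, ?_⟩
  have e1 : -δ - δ = -(2*δ) := by ring
  have e2 : -δ + δ = (0:ℝ) := by ring
  have e3 : -δ - 2*δ = -(3*δ) := by ring
  have e4 : -δ + 2*δ = δ := by ring
  have e5 : K * (2*δ/δ) = K * 2 := by rw [mul_div_assoc, div_self (ne_of_gt hδ0), mul_one]
  rw [e1, e2, e3, e4, e5]
  -- key power bound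
  have h2δ : 2*δ ≤ (ε/2) ^ p2 := by
    have := min_le_right (1/3:ℝ) ((ε/2) ^ p2 / 2)
    have h := this.trans_eq rfl
    linarith [hδdef ▸ this]
  have ht : (2*δ) ^ (1/p2) < ε := by
    have h1 : (2*δ) ^ (1/p2) ≤ ((ε/2) ^ p2) ^ (1/p2) :=
      Real.rpow_le_rpow (by positivity) h2δ (by positivity)
    have h2 : ((ε/2) ^ p2) ^ (1/p2) = ε/2 := by
      rw [← Real.rpow_mul (by positivity), mul_one_div, div_self (by positivity : p2 ≠ 0),
        Real.rpow_one]
    linarith [h1.trans_eq h2]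
  -- small ball upper bound
  have hSmeas : MeasurableSet (Ioo (-(2*δ)) (0:ℝ) ∩ Icc (-1:ℝ) 1) :=
    measurableSet_Ioo.inter measurableSet_Icc
  have hsmall : (∫⁻ y in Ioo (-(2*δ)) (0:ℝ) ∩ Icc (-1:ℝ) 1, ENNReal.ofReal (f y)) ≤
      ENNReal.ofReal (C * (2*δ) ^ (1/p2)) * ENNReal.ofReal (2*δ) := by
    have hb : ∀ y ∈ Ioo (-(2*δ)) (0:ℝ) ∩ Icc (-1:ℝ) 1,
        ENNReal.ofReal (f y) ≤ ENNReal.ofReal (C * (2*δ) ^ (1/p2)) := by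
      rintro y ⟨hy1, hy2⟩
      rw [hf_neg y hy2.1 (le_of_lt hy1.2)]
      refine ENNReal.ofReal_le_ofReal ?_
      have h : (-y) ^ (1/p2) ≤ (2*δ) ^ (1/p2) :=
        Real.rpow_le_rpow (by linarith [hy1.2]) (by linarith [hy1.1]) (by positivity)
      nlinarith [h]
    calc (∫⁻ y in Ioo (-(2*δ)) (0:ℝ) ∩ Icc (-1:ℝ) 1, ENNReal.ofReal (f y))
        ≤ ∫⁻ _ in Ioo (-(2*δ)) (0:ℝ) ∩ Icc (-1:ℝ) 1, ENNReal.ofReal (C * (2*δ) ^ (1/p2)) :=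
          lintegral_mono_ae ((ae_restrict_iff' hSmeas).2 (Filter.Eventually.of_forall hb))
      _ = ENNReal.ofReal (C * (2*δ) ^ (1/p2)) * volume (Ioo (-(2*δ)) (0:ℝ) ∩ Icc (-1:ℝ) 1) :=
          setLIntegral_const _ _
      _ ≤ ENNReal.ofReal (C * (2*δ) ^ (1/p2)) * ENNReal.ofReal (2*δ) := by
          refine mul_le_mul_right ?_ _
          refine (measure_mono inter_subset_left).trans ?_
          rw [Real.volume_Ioo]
          exact ENNReal.ofReal_le_ofReal (by linarith)
  -- big ball lower bound
  have hbig : ENNReal.ofReal (C * δ ^ (-(1/p1))) * ENNReal.ofReal δ ≤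
      ∫⁻ y in Ioo (-(3*δ)) δ ∩ Icc (-1:ℝ) 1, ENNReal.ofReal (f y) := by
    have hsub : Ioo (0:ℝ) δ ⊆ Ioo (-(3*δ)) δ ∩ Icc (-1:ℝ) 1 := by
      rintro y ⟨h1, h2⟩
      exact ⟨⟨by linarith, h2⟩, ⟨by linarith, by linarith⟩⟩
    have hb : ∀ y ∈ Ioo (0:ℝ) δ,
        ENNReal.ofReal (C * δ ^ (-(1/p1))) ≤ ENNReal.ofReal (f y) := by
      rintro y ⟨h1, h2⟩
      rw [hf_pos y h1 (by linarith)]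
      refine ENNReal.ofReal_le_ofReal ?_
      have h : δ ^ (-(1/p1)) ≤ y ^ (-(1/p1)) :=
        Real.rpow_le_rpow_of_nonpos h1 (le_of_lt h2) (neg_nonpos.mpr (by positivity))
      nlinarith [h]
    calc ENNReal.ofReal (C * δ ^ (-(1/p1))) * ENNReal.ofReal δ
        = ∫⁻ _ in Ioo (0:ℝ) δ, ENNReal.ofReal (C * δ ^ (-(1/p1))) := by
          rw [setLIntegral_const, Real.volume_Ioo, sub_zero]
      _ ≤ ∫⁻ y in Ioo (0:ℝ) δ, ENNReal.ofReal (f y) :=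
          lintegral_mono_ae ((ae_restrict_iff' measurableSet_Ioo).2
            (Filter.Eventually.of_forall hb))
      _ ≤ ∫⁻ y in Ioo (-(3*δ)) δ ∩ Icc (-1:ℝ) 1, ENNReal.ofReal (f y) :=
          lintegral_mono_set hsub
  -- the real inequality
  have hu : (1:ℝ) ≤ δ ^ (-(1/p1)) := by
    have h := Real.rpow_le_rpow_of_exponent_ge hδ0 hδ1
      (neg_nonpos.mpr (by positivity) : -(1/p1) ≤ (0:ℝ))
    simpa using h
  have ht' : 4 * K' * ((2*δ) ^ (1/p2)) < 1 := by
    have h := mul_lt_mul_of_pos_left ht (by positivity : (0:ℝ) < 4 * K')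
    rw [hεdef] at h
    calc 4*K'*((2*δ) ^ (1/p2)) < 4*K'*(1/(4*K')) := h
      _ = 1 := by field_simp
  have hreal : K' * 2 * (C * (2*δ) ^ (1/p2) * (2*δ)) < C * δ ^ (-(1/p1)) * δ := by
    have hposδC : 0 < C * δ := mul_pos hC hδ0
    nlinarith [mul_lt_mul_of_pos_left ht' hposδC,
      mul_le_mul_of_nonneg_left hu (le_of_lt hposδC)]
  calc ENNReal.ofReal (K * 2) *
        (∫⁻ y in Ioo (-(2*δ)) (0:ℝ) ∩ Icc (-1:ℝ) 1, ENNReal.ofReal (f y))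
      ≤ ENNReal.ofReal (K' * 2) *
        (ENNReal.ofReal (C * (2*δ) ^ (1/p2)) * ENNReal.ofReal (2*δ)) :=
        mul_le_mul' (ENNReal.ofReal_le_ofReal (by nlinarith [le_max_left K 1])) hsmall
    _ = ENNReal.ofReal (K' * 2 * (C * (2*δ) ^ (1/p2) * (2*δ))) := by
        rw [← ENNReal.ofReal_mul (by positivity : (0:ℝ) ≤ C * (2*δ) ^ (1/p2)),
          ← ENNReal.ofReal_mul (by positivity : (0:ℝ) ≤ K' * 2)]
    _ < ENNReal.ofReal (C * δ ^ (-(1/p1)) * δ) :=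
        (ENNReal.ofReal_lt_ofReal_iff (by positivity)).2 hreal
    _ = ENNReal.ofReal (C * δ ^ (-(1/p1))) * ENNReal.ofReal δ :=
        ENNReal.ofReal_mul (by positivity)
    _ ≤ _ := hbig
end

section
/- With f_p as above (p ∈ (1, 3/2]), ∫_0^1 f_p(x)^p dx = ∞. In particular the probability measure with density f_p is not in L^p. -/
open MeasureTheory Set ENNReal

private lemma nat_two_mul_le : ∀ k : ℕ, 1 ≤ k → 2 * k ≤ 2 ^ k := by
  intro k hk
  induction k, hk using Nat.le_induction with
  | base => norm_num
  | succ n hn ih =>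
    have h2 : 2 ≤ 2 ^ n := by
      calc 2 = 2^1 := by norm_num
      _ ≤ 2^n := Nat.pow_le_pow_right (by norm_num) hn
    have : 2 ^ (n+1) = 2^n + 2^n := by ring
    omega

private lemma fp_radius_le {p : ℝ} (hp : 1 < p) (hp' : p ≤ 3/2) {k : ℕ} (hk : 1 ≤ k) :
    ((k:ℝ) * (2:ℝ) ^ (-(p * (k:ℝ)))) ^ (1 / (p - 1)) ≤ (2:ℝ) ^ (-(k:ℝ)) / 4 := by
  have hp1 : (0:ℝ) < p - 1 := by linarith
  have hK1 : (1:ℝ) ≤ (k:ℝ) := by exact_mod_cast hk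
  have hKpos : (0:ℝ) < (k:ℝ) := by linarith
  have hB : (0:ℝ) < (2:ℝ) ^ (-(p*(k:ℝ))) := Real.rpow_pos_of_pos (by norm_num) _
  have h22 : (2:ℝ) ^ (2:ℝ) = 4 := by
    rw [show (2:ℝ) = ((2:ℕ):ℝ) from by norm_num]
    rw [Real.rpow_natCast]; norm_num
  have h4 : (2:ℝ)^(-(k:ℝ))/4 = (2:ℝ)^(-(k:ℝ)-2) := by
    rw [Real.rpow_sub (by norm_num), h22]
  -- K ≤ 2^(K-1)
  have hKle : (k:ℝ) ≤ (2:ℝ) ^ ((k:ℝ) - 1) := by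
    have hnat : (2:ℝ) * (k:ℝ) ≤ (2:ℝ) ^ (k:ℕ) := by exact_mod_cast nat_two_mul_le k hk
    have : (2:ℝ) ^ ((k:ℝ) - 1) = (2:ℝ) ^ (k:ℕ) / 2 := by
      rw [Real.rpow_sub (by norm_num), Real.rpow_one, Real.rpow_natCast]
    rw [this]; linarith
  have hKle2 : (k:ℝ) ≤ (2:ℝ) ^ ((k:ℝ) - 2*(p-1)) := by
    refine hKle.trans (Real.rpow_le_rpow_of_exponent_le one_le_two (by linarith))
  have hmain : (k:ℝ) * (2:ℝ) ^ (-(p*(k:ℝ))) ≤ ((2:ℝ)^(-(k:ℝ)-2)) ^ (p-1) := by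
    have h1 : (k:ℝ) * (2:ℝ) ^ (-(p*(k:ℝ))) ≤ (2:ℝ) ^ ((k:ℝ) - 2*(p-1)) * (2:ℝ) ^ (-(p*(k:ℝ))) :=
      mul_le_mul_of_nonneg_right hKle2 hB.le
    have h2 : (2:ℝ) ^ ((k:ℝ) - 2*(p-1)) * (2:ℝ) ^ (-(p*(k:ℝ))) = ((2:ℝ)^(-(k:ℝ)-2)) ^ (p-1) := by
      rw [← Real.rpow_add (by norm_num), ← Real.rpow_mul (by norm_num)]
      congr 1; ring
    linarith [h2 ▸ h1]
  calc ((k:ℝ) * (2:ℝ) ^ (-(p * (k:ℝ)))) ^ (1 / (p - 1))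
      ≤ (((2:ℝ)^(-(k:ℝ)-2)) ^ (p-1)) ^ (1/(p-1)) :=
        Real.rpow_le_rpow (by positivity) hmain (by positivity)
    _ = (2:ℝ)^(-(k:ℝ)-2) := by
        rw [← Real.rpow_mul (Real.rpow_pos_of_pos (by norm_num) _).le,
          mul_one_div, div_self hp1.ne', Real.rpow_one]
    _ = (2:ℝ)^(-(k:ℝ))/4 := h4.symm

private lemma fp_value {p : ℝ} (hp : 1 < p) {k : ℕ} (hk : 1 ≤ k) :
    ((1/2) * ((2:ℝ) ^ ((k:ℝ)) / (k:ℝ)) ^ (1/(p-1))) ^ p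
      * (2 * ((k:ℝ) * (2:ℝ) ^ (-(p * (k:ℝ)))) ^ (1/(p-1)))
      = (1/2:ℝ) ^ (p-1) / (k:ℝ) := by
  have hp1 : (0:ℝ) < p - 1 := by linarith
  have hKpos : (0:ℝ) < (k:ℝ) := by exact_mod_cast hk
  have hA : (0:ℝ) < (2:ℝ) ^ ((k:ℝ)) := Real.rpow_pos_of_pos (by norm_num) _
  have hB : (0:ℝ) < (2:ℝ) ^ (-(p*(k:ℝ))) := Real.rpow_pos_of_pos (by norm_num) _
  set A := (2:ℝ) ^ ((k:ℝ)) with hAdef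
  set B := (2:ℝ) ^ (-(p*(k:ℝ))) with hBdef
  set X := (A/(k:ℝ)) ^ (1/(p-1)) with hXdef
  set Y := ((k:ℝ) * B) ^ (1/(p-1)) with hYdef
  have hAK : (0:ℝ) < A/(k:ℝ) := div_pos hA hKpos
  have hX : (0:ℝ) < X := Real.rpow_pos_of_pos hAK _
  have hc : (0:ℝ) < (1/2:ℝ) * X := by positivity
  have hXp : X ^ (p-1) = A/(k:ℝ) := by
    rw [hXdef, ← Real.rpow_mul hAK.le, one_div, inv_mul_cancel₀ hp1.ne', Real.rpow_one]
  have hXY : X * Y = (2:ℝ) ^ (-(k:ℝ)) := by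
    rw [hXdef, hYdef, ← Real.mul_rpow hAK.le (by positivity)]
    have h1 : A/(k:ℝ) * ((k:ℝ) * B) = A * B := by field_simp
    rw [h1, hAdef, hBdef, ← Real.rpow_add (by norm_num)]
    rw [← Real.rpow_mul (by norm_num)]
    congr 1
    field_simp
    ring
  have hA2 : A * (2:ℝ) ^ (-(k:ℝ)) = 1 := by
    rw [hAdef, ← Real.rpow_add (by norm_num)]
    simp
  have hcp : ((1/2:ℝ) * X) ^ p = ((1/2:ℝ) * X) ^ (p-1) * ((1/2:ℝ) * X) := by
    have hpe : p - 1 + 1 = p := by ring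
    conv_lhs => rw [← hpe]
    rw [Real.rpow_add hc, Real.rpow_one]
  calc ((1/2:ℝ) * X) ^ p * (2 * Y)
      = (((1/2:ℝ)) ^ (p-1) * X ^ (p-1)) * ((1/2:ℝ) * X) * (2 * Y) := by
        rw [hcp, Real.mul_rpow (by norm_num) hX.le]
    _ = (1/2:ℝ) ^ (p-1) * (A/(k:ℝ)) * (X * Y) := by rw [hXp]; ring
    _ = (1/2:ℝ) ^ (p-1) * (A * (2:ℝ)^(-(k:ℝ)) / (k:ℝ)) := by rw [hXY]; ring
    _ = (1/2:ℝ) ^ (p-1) / (k:ℝ) := by rw [hA2]; ring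

/-- The density `f_p`, equal to `(1/2)(2^k/k)^{1/(p-1)}` on the pairwise disjoint balls
`B(2^{-k}, (k 2^{-pk})^{1/(p-1)})` and zero elsewhere, is not in `L^p`: `∫_0^1 f_p^p = ∞`. -/
theorem fp_not_in_Lp (p : ℝ) (hp : 1 < p) (hp' : p ≤ 3 / 2)
    (f : ℝ → ℝ≥0∞)
    (hball : ∀ k : ℕ, 1 ≤ k →
      ∀ x ∈ Ioo ((2:ℝ) ^ (-(k:ℝ)) - ((k:ℝ) * (2:ℝ) ^ (-(p * (k:ℝ)))) ^ (1 / (p - 1)))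
          ((2:ℝ) ^ (-(k:ℝ)) + ((k:ℝ) * (2:ℝ) ^ (-(p * (k:ℝ)))) ^ (1 / (p - 1))),
        f x = ENNReal.ofReal ((1 / 2) * ((2:ℝ) ^ ((k:ℝ)) / (k:ℝ)) ^ (1 / (p - 1))))
    (hzero : ∀ x : ℝ,
      (∀ k : ℕ, 1 ≤ k →
        x ∉ Ioo ((2:ℝ) ^ (-(k:ℝ)) - ((k:ℝ) * (2:ℝ) ^ (-(p * (k:ℝ)))) ^ (1 / (p - 1)))
          ((2:ℝ) ^ (-(k:ℝ)) + ((k:ℝ) * (2:ℝ) ^ (-(p * (k:ℝ)))) ^ (1 / (p - 1)))) →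
      f x = 0) :
    ∫⁻ x in Icc (0:ℝ) 1, f x ^ p = ∞ := by
  have hp1 : (0:ℝ) < p - 1 := by linarith
  set R : ℕ → ℝ := fun k => ((k:ℝ) * (2:ℝ) ^ (-(p * (k:ℝ)))) ^ (1 / (p - 1)) with hRdef
  set S : ℕ → Set ℝ := fun k =>
    Ioo ((2:ℝ) ^ (-(k:ℝ)) - R k) ((2:ℝ) ^ (-(k:ℝ)) + R k) with hSdef
  have h2pos : ∀ k : ℕ, (0:ℝ) < (2:ℝ) ^ (-(k:ℝ)) :=
    fun k => Real.rpow_pos_of_pos (by norm_num) _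
  have hrpos : ∀ k : ℕ, 1 ≤ k → 0 < R k := by
    intro k hk
    have : (0:ℝ) < (k:ℝ) := by exact_mod_cast hk
    exact Real.rpow_pos_of_pos (by positivity) _
  have hrle : ∀ k : ℕ, 1 ≤ k → R k ≤ (2:ℝ) ^ (-(k:ℝ)) / 4 :=
    fun k hk => fp_radius_le hp hp' hk
  -- monotonicity of 2^{-k}
  have h2mono : ∀ i j : ℕ, i < j → (2:ℝ) ^ (-(j:ℝ)) ≤ (2:ℝ) ^ (-(i:ℝ)) / 2 := by
    intro i j hij
    have : (2:ℝ) ^ (-(i:ℝ)) / 2 = (2:ℝ) ^ (-(i:ℝ) - 1) := by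
      rw [Real.rpow_sub (by norm_num), Real.rpow_one]
    rw [this]
    apply Real.rpow_le_rpow_of_exponent_le one_le_two
    have : (i:ℝ) + 1 ≤ (j:ℝ) := by exact_mod_cast hij
    linarith
  -- subset of Icc 0 1
  have hsub : ∀ k : ℕ, 1 ≤ k → S k ⊆ Icc (0:ℝ) 1 := by
    intro k hk x hx
    obtain ⟨hx1, hx2⟩ := hx
    have h1 := hrle k hk
    have h2 := h2pos k
    have h3 : (2:ℝ) ^ (-(k:ℝ)) ≤ 1/2 := by
      have : (2:ℝ) ^ (-(k:ℝ)) ≤ (2:ℝ) ^ (-1:ℝ) := by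
        apply Real.rpow_le_rpow_of_exponent_le one_le_two
        have : (1:ℝ) ≤ (k:ℝ) := by exact_mod_cast hk
        linarith
      rw [Real.rpow_neg_one] at this
      linarith
    exact ⟨by nlinarith, by nlinarith⟩
  -- pairwise disjointness
  have hdisjkey : ∀ i j : ℕ, 1 ≤ i → i < j → Disjoint (S j) (S i) := by
    intro i j hi hij
    have hj : 1 ≤ j := hi.trans hij.le
    rw [Set.disjoint_left]
    intro x hxj hxi
    have h1 := hrle j hj
    have h2 := hrle i hi
    have h3 := h2mono i j hij
    obtain ⟨hxj1, hxj2⟩ := hxj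
    obtain ⟨hxi1, hxi2⟩ := hxi
    nlinarith [h2pos i, h2pos j]
  have hdisj : Pairwise (Function.onFun Disjoint (fun n : ℕ => S (n+1))) := by
    intro m n hmn
    rcases lt_or_gt_of_ne hmn with h | h
    · exact (hdisjkey (m+1) (n+1) (Nat.succ_le_succ m.zero_le) (by omega)).symm
    · exact hdisjkey (n+1) (m+1) (Nat.succ_le_succ n.zero_le) (by omega)
  have hmeas : ∀ n : ℕ, MeasurableSet (S (n+1)) := fun n => measurableSet_Ioo
  have hUsub : (⋃ n : ℕ, S (n+1)) ⊆ Icc (0:ℝ) 1 :=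
    iUnion_subset fun n => hsub (n+1) (Nat.succ_le_succ n.zero_le)
  have h1 : ∫⁻ x in ⋃ n : ℕ, S (n+1), f x ^ p ≤ ∫⁻ x in Icc (0:ℝ) 1, f x ^ p :=
    lintegral_mono_set hUsub
  rw [lintegral_iUnion hmeas hdisj] at h1
  -- compute each term
  have hterm : ∀ n : ℕ, ∫⁻ x in S (n+1), f x ^ p
      = ENNReal.ofReal ((1/2:ℝ) ^ (p-1) / ((n+1:ℕ):ℝ)) := by
    intro n
    have hk : 1 ≤ n + 1 := Nat.succ_le_succ n.zero_le
    have hconst : ∫⁻ x in S (n+1), f x ^ p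
        = ∫⁻ _ in S (n+1),
            (ENNReal.ofReal ((1/2) * ((2:ℝ) ^ (((n+1:ℕ)):ℝ) / ((n+1:ℕ):ℝ)) ^ (1/(p-1)))) ^ p := by
      apply setLIntegral_congr_fun (measurableSet_Ioo)
      intro x hx
      beta_reduce
      rw [hball (n+1) hk x hx]
    rw [hconst, setLIntegral_const]
    have hvol : volume (S (n+1)) = ENNReal.ofReal (2 * R (n+1)) := by
      rw [hSdef]
      simp only [Real.volume_Ioo]
      congr 1
      ring
    have hC : (0:ℝ) ≤ (1/2) * ((2:ℝ) ^ (((n+1:ℕ)):ℝ) / ((n+1:ℕ):ℝ)) ^ (1/(p-1)) := by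
      positivity
    rw [hvol, ENNReal.ofReal_rpow_of_nonneg hC (by linarith : (0:ℝ) ≤ p),
      ← ENNReal.ofReal_mul (by positivity)]
    congr 1
    exact fp_value hp hk
  simp_rw [hterm] at h1
  -- the series diverges
  have hc : (0:ℝ) < (1/2:ℝ) ^ (p-1) := Real.rpow_pos_of_pos (by norm_num) _
  have hsum : ∑' n : ℕ, ENNReal.ofReal ((1/2:ℝ) ^ (p-1) / ((n+1:ℕ):ℝ)) = ∞ := by
    by_contra h
    simp only [ENNReal.ofReal] at h
    have hsummable : Summable (fun n : ℕ => ((1/2:ℝ) ^ (p-1) / ((n+1:ℕ):ℝ)).toNNReal) :=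
      ENNReal.tsum_coe_ne_top_iff_summable.mp h
    have h2 : Summable (fun n : ℕ => (1/2:ℝ) ^ (p-1) / ((n+1:ℕ):ℝ)) := by
      have := NNReal.summable_coe.mpr hsummable
      refine this.congr fun n => ?_
      rw [Real.coe_toNNReal _ (by positivity)]
    have h3 : Summable (fun n : ℕ => 1 / (((n:ℕ):ℝ) + 1)) := by
      have h4 := h2.mul_left ((1/2:ℝ) ^ (p-1))⁻¹
      refine h4.congr fun n => ?_
      have : ((n+1:ℕ):ℝ) = (n:ℝ) + 1 := by push_cast; ring
      rw [this]
      field_simp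
    have h5 : Summable (fun n : ℕ => 1 / (n:ℝ)) := by
      refine (summable_nat_add_iff 1).1 ?_
      refine h3.congr fun n => ?_
      push_cast
      ring_nf
    exact Real.not_summable_one_div_natCast h5
  rw [hsum] at h1
  exact top_le_iff.mp h1
end

section
/- Suppose μ is a probability measure on [0,1] absolutely continuous with non-increasing density f, f > 0 on (0,1). If there exist C > 0 and s ∈ (0,1) such that μ(B(x,R))/μ(B(x,r)) ≥ C(R/r)^s for all x ∈ [0,1] and 0 < r < R ≤ 1 (i.e. the lower dimension of μ is at least s), then f ∈ L^{p'}([0,1]) for every p' with p'(1 − s) < 1. -/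
open MeasureTheory Set ENNReal

/-- If a probability measure on `[0,1]` with non-increasing positive density `f` has
lower dimension at least `s` (in the sense of a uniform lower bound on ratios of
measures of concentric balls), then `f ∈ L^{p'}` whenever `p'(1 - s) < 1`. -/
theorem monotone_density_lower_dim_implies_Lp (f : ℝ → ℝ)
    (hmono : AntitoneOn f (Ioo (0:ℝ) 1)) (hfpos : ∀ x ∈ Ioo (0:ℝ) 1, 0 < f x)
    (hprob : ∫⁻ x in Icc (0:ℝ) 1, ENNReal.ofReal (f x) = 1)
    (C s : ℝ) (hC : 0 < C) (hs0 : 0 < s) (hs1 : s < 1)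
    (hlower : ∀ x ∈ Icc (0:ℝ) 1, ∀ r R : ℝ, 0 < r → r < R → R ≤ 1 →
      ENNReal.ofReal (C * (R / r) ^ s) *
          (∫⁻ y in Ioo (x - r) (x + r) ∩ Icc (0:ℝ) 1, ENNReal.ofReal (f y)) ≤
        ∫⁻ y in Ioo (x - R) (x + R) ∩ Icc (0:ℝ) 1, ENNReal.ofReal (f y)) :
    ∀ p' : ℝ, 1 ≤ p' → p' * (1 - s) < 1 →
      ∫⁻ x in Icc (0:ℝ) 1, ENNReal.ofReal (f x ^ p') ≠ ∞ := by
  intro p' hp1 hps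
  -- Step 1: pointwise bound f y ≤ C⁻¹ * y ^ (s - 1) for y ∈ (0,1).
  have key : ∀ y ∈ Ioo (0:ℝ) 1, f y ≤ C⁻¹ * y ^ (s - 1) := by
    intro y hy
    obtain ⟨hy0, hy1⟩ := hy
    have h1 := hlower 0 (by constructor <;> norm_num) y 1 hy0 hy1 le_rfl
    simp only [zero_sub, zero_add] at h1
    -- big ball integral ≤ 1
    have hbig : (∫⁻ t in Ioo (-1:ℝ) 1 ∩ Icc (0:ℝ) 1, ENNReal.ofReal (f t)) ≤ 1 := by
      rw [← hprob]
      exact lintegral_mono_set inter_subset_right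
    -- small ball integral ≥ f y * y
    have hsub : Ioo (0:ℝ) y ⊆ Ioo (-y) y ∩ Icc (0:ℝ) 1 := by
      intro t ht
      exact ⟨⟨by linarith [ht.1], ht.2⟩, le_of_lt ht.1, by linarith [ht.2]⟩
    have hsmall : ENNReal.ofReal (f y) * ENNReal.ofReal y ≤
        ∫⁻ t in Ioo (-y) y ∩ Icc (0:ℝ) 1, ENNReal.ofReal (f t) := by
      refine le_trans ?_ (lintegral_mono_set hsub)
      have h2 : ∫⁻ _ in Ioo (0:ℝ) y, ENNReal.ofReal (f y) =
          ENNReal.ofReal (f y) * ENNReal.ofReal y := by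
        rw [setLIntegral_const, Real.volume_Ioo]
        norm_num
      rw [← h2]
      refine setLIntegral_mono' measurableSet_Ioo fun t ht => ?_
      exact ENNReal.ofReal_le_ofReal (hmono ⟨ht.1, lt_trans ht.2 hy1⟩ ⟨hy0, hy1⟩ (le_of_lt ht.2))
    have hmain : ENNReal.ofReal (C * (1 / y) ^ s) * (ENNReal.ofReal (f y) * ENNReal.ofReal y)
        ≤ 1 := by
      calc ENNReal.ofReal (C * (1 / y) ^ s) * (ENNReal.ofReal (f y) * ENNReal.ofReal y)
          ≤ ENNReal.ofReal (C * (1 / y) ^ s) *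
            (∫⁻ t in Ioo (-y) y ∩ Icc (0:ℝ) 1, ENNReal.ofReal (f t)) :=
            mul_le_mul_right hsmall _
        _ ≤ ∫⁻ t in Ioo (-1:ℝ) 1 ∩ Icc (0:ℝ) 1, ENNReal.ofReal (f t) := h1
        _ ≤ 1 := hbig
    -- convert to a real inequality
    have hfy : 0 ≤ f y := le_of_lt (hfpos y ⟨hy0, hy1⟩)
    have hpow : 0 < (1 / y) ^ s := Real.rpow_pos_of_pos (by positivity) s
    rw [← ENNReal.ofReal_mul hfy, ← ENNReal.ofReal_mul (by positivity), ← ENNReal.ofReal_one]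
      at hmain
    have hreal : C * (1 / y) ^ s * (f y * y) ≤ 1 :=
      (ENNReal.ofReal_le_ofReal_iff zero_le_one).mp hmain
    -- algebra
    have hyspos : 0 < y ^ s := Real.rpow_pos_of_pos hy0 s
    have hys : (1 / y) ^ s = (y ^ s)⁻¹ := by
      rw [one_div, ← Real.rpow_neg_one y, ← Real.rpow_mul (le_of_lt hy0),
        neg_one_mul, Real.rpow_neg (le_of_lt hy0)]
    have hys1 : y ^ (s - 1) = y ^ s * y⁻¹ := by
      rw [Real.rpow_sub hy0, Real.rpow_one, div_eq_mul_inv]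
    rw [hys] at hreal
    rw [hys1]
    have hd : 0 < C * (y ^ s)⁻¹ * y := by positivity
    have hreal' : f y * (C * (y ^ s)⁻¹ * y) ≤ 1 := by nlinarith [hreal]
    have h4 : f y ≤ 1 / (C * (y ^ s)⁻¹ * y) := (le_div_iff₀ hd).mpr hreal'
    calc f y ≤ 1 / (C * (y ^ s)⁻¹ * y) := h4
      _ = C⁻¹ * (y ^ s * y⁻¹) := by field_simp
  -- Step 2: integrate the bound.
  set a : ℝ := (s - 1) * p' with ha_def
  have ha : -1 < a := by nlinarith
  have hp0 : 0 ≤ p' := le_trans zero_le_one hp1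
  have hbound : ∀ x ∈ Ioo (0:ℝ) 1,
      ENNReal.ofReal (f x ^ p') ≤ ENNReal.ofReal (C⁻¹ ^ p' * x ^ a) := by
    intro x hx
    apply ENNReal.ofReal_le_ofReal
    have h1 : f x ^ p' ≤ (C⁻¹ * x ^ (s - 1)) ^ p' :=
      Real.rpow_le_rpow (le_of_lt (hfpos x hx)) (key x hx) hp0
    calc f x ^ p' ≤ (C⁻¹ * x ^ (s - 1)) ^ p' := h1
      _ = C⁻¹ ^ p' * x ^ a := by
          rw [Real.mul_rpow (by positivity) (le_of_lt (Real.rpow_pos_of_pos hx.1 _)),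
            ← Real.rpow_mul (le_of_lt hx.1)]
  have hIoo : ∫⁻ x in Icc (0:ℝ) 1, ENNReal.ofReal (f x ^ p') =
      ∫⁻ x in Ioo (0:ℝ) 1, ENNReal.ofReal (f x ^ p') :=
    (setLIntegral_congr Ioo_ae_eq_Icc).symm
  rw [hIoo]
  have hint : IntegrableOn (fun x => C⁻¹ ^ p' * x ^ a) (Ioo (0:ℝ) 1) volume :=
    ((intervalIntegral.integrableOn_Ioo_rpow_iff one_pos).2 ha).const_mul _
  have hfin : ∫⁻ x in Ioo (0:ℝ) 1, ENNReal.ofReal (C⁻¹ ^ p' * x ^ a) < ∞ := by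
    have hnn : 0 ≤ᵐ[volume.restrict (Ioo (0:ℝ) 1)] fun x => C⁻¹ ^ p' * x ^ a := by
      refine (ae_restrict_iff' measurableSet_Ioo).2 (Filter.Eventually.of_forall fun x hx => ?_)
      have : (0:ℝ) < x := hx.1
      positivity
    exact (hasFiniteIntegral_iff_ofReal hnn).mp hint.2
  exact ne_of_lt (lt_of_le_of_lt (setLIntegral_mono' measurableSet_Ioo hbound) hfin)
end

section
/- Let ν be a measure on a compact set X ⊆ ℝ^d and s ≥ t ≥ 0 with c₁ r^s ≤ ν(B(x,r)) ≤ c₂ r^t for all x ∈ X and 0 < r < 1. Let μ be absolutely continuous with respect to ν with density f satisfying ∫_X f^{p1} dν < ∞ and ∫_X f^{−p2} dν < ∞ for p1, p2 ∈ [1,∞), f > 0 ν-a.e. Then there is a constant c > 0 such that for all x ∈ X and 0 < r ≤ R < 1, μ(B(x,R))/μ(B(x,r)) ≤ c · R^{t(1−1/p1)} / r^{s(1+1/p2)}. -/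
open MeasureTheory Set ENNReal Metric

/-- General reference measure version: if `ν` satisfies `c₁ r^s ≤ ν(B(x,r)) ≤ c₂ r^t` on
a compact `X ⊆ ℝ^d` and `μ` has density `f` with respect to `ν` with `f ∈ L^{p1}(ν)` and
`1/f ∈ L^{p2}(ν)`, then `μ(B(x,R))/μ(B(x,r)) ≤ c · R^{t(1-1/p1)} / r^{s(1+1/p2)}`. -/
theorem general_reference_measure_bound (d : ℕ)
    (ν : Measure (EuclideanSpace ℝ (Fin d)))
    (X : Set (EuclideanSpace ℝ (Fin d))) (hX : IsCompact X) (hXne : X.Nonempty)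
    (s t c1 c2 : ℝ) (hts : 0 ≤ t) (hst : t ≤ s) (hc1 : 0 < c1) (hc2 : 0 < c2)
    (hν : ∀ x ∈ X, ∀ r : ℝ, 0 < r → r < 1 →
      ENNReal.ofReal (c1 * r ^ s) ≤ ν (closedBall x r ∩ X) ∧
      ν (closedBall x r ∩ X) ≤ ENNReal.ofReal (c2 * r ^ t))
    (f : EuclideanSpace ℝ (Fin d) → ℝ≥0∞) (hf : Measurable f)
    (hpos : ∀ᵐ x ∂(ν.restrict X), 0 < f x)
    (p1 p2 : ℝ) (hp1 : 1 ≤ p1) (hp2 : 1 ≤ p2)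
    (hLp1 : ∫⁻ x in X, f x ^ p1 ∂ν ≠ ∞)
    (hLp2 : ∫⁻ x in X, f x ^ (-p2) ∂ν ≠ ∞) :
    ∃ c : ℝ, 0 < c ∧ ∀ x ∈ X, ∀ r R : ℝ, 0 < r → r ≤ R → R < 1 →
      (∫⁻ y in closedBall x R ∩ X, f y ∂ν) / (∫⁻ y in closedBall x r ∩ X, f y ∂ν) ≤
        ENNReal.ofReal (c * R ^ (t * (1 - 1 / p1)) / r ^ (s * (1 + 1 / p2))) := by
  have hp1' : 0 < p1 := lt_of_lt_of_le one_pos hp1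
  have hp2' : 0 < p2 := lt_of_lt_of_le one_pos hp2
  set A := ∫⁻ x in X, f x ^ p1 ∂ν with hAdef
  set B := ∫⁻ x in X, f x ^ (-p2) ∂ν with hBdef
  obtain ⟨x₀, hx₀⟩ := hXne
  have hνX : 0 < ν X := by
    have h := (hν x₀ hx₀ (1/2) (by norm_num) (by norm_num)).1
    calc (0:ℝ≥0∞) < ENNReal.ofReal (c1 * (1/2:ℝ) ^ s) := by
          rw [ENNReal.ofReal_pos]; positivity
      _ ≤ ν (closedBall x₀ (1/2) ∩ X) := h
      _ ≤ ν X := measure_mono inter_subset_right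
  have hfin : ∀ᵐ x ∂ν.restrict X, f x < ∞ := by
    have h := ae_lt_top (hf.pow_const p1) hLp1
    filter_upwards [h] with x hx
    by_contra hcon
    push_neg at hcon
    have hx' : f x = ∞ := top_le_iff.mp hcon
    rw [hx', ENNReal.top_rpow_of_pos hp1'] at hx
    exact lt_irrefl _ hx
  have hrestr0 : ¬ (∀ᵐ x ∂ν.restrict X, False) := by
    intro h
    have h2 : ν.restrict X = 0 := ae_eq_bot.mp (Filter.eventually_false_iff_eq_bot.mp h)
    rw [Measure.restrict_eq_zero] at h2
    exact hνX.ne' h2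
  have hA0 : A ≠ 0 := by
    intro h
    rw [hAdef, lintegral_eq_zero_iff (hf.pow_const p1)] at h
    refine hrestr0 ?_
    filter_upwards [h, hpos] with x hx hx'
    simp only [Pi.zero_apply] at hx
    rcases ENNReal.rpow_eq_zero_iff.mp hx with ⟨h1, _⟩ | ⟨_, h2⟩
    · exact hx'.ne' h1
    · exact absurd h2 (not_lt.mpr hp1'.le)
  have hB0 : B ≠ 0 := by
    intro h
    rw [hBdef, lintegral_eq_zero_iff (hf.pow_const (-p2))] at h
    refine hrestr0 ?_
    filter_upwards [h, hfin] with x hx hx'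
    simp only [Pi.zero_apply] at hx
    rcases ENNReal.rpow_eq_zero_iff.mp hx with ⟨_, h2⟩ | ⟨h1, _⟩
    · exact absurd h2 (not_lt.mpr (by linarith))
    · exact hx'.ne h1
  set KA := (A ^ (1/p1)).toReal with hKAdef
  set KB := (B ^ (1/p2)).toReal with hKBdef
  have hApow_ne_top : A ^ (1/p1) ≠ ∞ :=
    ENNReal.rpow_ne_top_of_nonneg (by positivity) hLp1
  have hBpow_ne_top : B ^ (1/p2) ≠ ∞ :=
    ENNReal.rpow_ne_top_of_nonneg (by positivity) hLp2
  have hApow_ne_zero : A ^ (1/p1) ≠ 0 :=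
    (ENNReal.rpow_pos (pos_iff_ne_zero.mpr hA0) hLp1).ne'
  have hBpow_ne_zero : B ^ (1/p2) ≠ 0 :=
    (ENNReal.rpow_pos (pos_iff_ne_zero.mpr hB0) hLp2).ne'
  have hKA : 0 < KA := ENNReal.toReal_pos hApow_ne_zero hApow_ne_top
  have hKB : 0 < KB := ENNReal.toReal_pos hBpow_ne_zero hBpow_ne_top
  have hAofReal : A ^ (1/p1) = ENNReal.ofReal KA := (ENNReal.ofReal_toReal hApow_ne_top).symm
  have hBofReal : B ^ (1/p2) = ENNReal.ofReal KB := (ENNReal.ofReal_toReal hBpow_ne_top).symm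
  -- upper bound
  have upper : ∀ x ∈ X, ∀ R : ℝ, 0 < R → R < 1 →
      ∫⁻ y in closedBall x R ∩ X, f y ∂ν ≤
        ENNReal.ofReal (KA * (c2 * R ^ t) ^ (1 - 1/p1)) := by
    intro x hx R hR hR1
    set S := closedBall x R ∩ X with hSdef
    have hSX : S ⊆ X := inter_subset_right
    have hνS : ν S ≤ ENNReal.ofReal (c2 * R ^ t) := (hν x hx R hR hR1).2
    have hc2R : (0:ℝ) < c2 * R ^ t := by positivity
    have key : ∫⁻ y in S, f y ∂ν ≤ A ^ (1/p1) * (ENNReal.ofReal (c2 * R^t)) ^ (1 - 1/p1) := by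
      rcases eq_or_lt_of_le hp1 with h1 | h1
      · have he : (1:ℝ) - 1/p1 = 0 := by rw [← h1]; norm_num
        rw [he, ENNReal.rpow_zero, mul_one]
        calc ∫⁻ y in S, f y ∂ν ≤ ∫⁻ y in X, f y ∂ν := lintegral_mono_set hSX
          _ = A := by
              rw [hAdef]; apply lintegral_congr; intro y; rw [← h1, ENNReal.rpow_one]
          _ = A ^ (1/p1) := by rw [← h1]; simp
      · set q := p1 / (p1 - 1) with hqdef
        have hp1ne : p1 ≠ 0 := hp1'.ne'
        have hp1m : p1 - 1 ≠ 0 := by intro h; rw [sub_eq_zero] at h; exact h1.ne' h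
        have hpq : p1.HolderConjugate q := (Real.holderConjugate_iff_eq_conjExponent h1).2 hqdef
        have hq : 1/q = 1 - 1/p1 := by rw [hqdef]; field_simp
        have hold := ENNReal.lintegral_mul_le_Lp_mul_Lq (ν.restrict S) hpq
          hf.aemeasurable (aemeasurable_const (b := (1:ℝ≥0∞)))
        simp only [Pi.mul_apply, mul_one, ENNReal.one_rpow, lintegral_const,
          Measure.restrict_apply MeasurableSet.univ, univ_inter, one_mul] at hold
        calc ∫⁻ y in S, f y ∂ν
            ≤ (∫⁻ y in S, f y ^ p1 ∂ν) ^ (1/p1) * (ν S) ^ (1/q) := hold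
          _ ≤ A ^ (1/p1) * (ENNReal.ofReal (c2 * R^t)) ^ (1/q) :=
              mul_le_mul'
                (ENNReal.rpow_le_rpow (lintegral_mono_set hSX) (one_div_nonneg.mpr hp1'.le))
                (ENNReal.rpow_le_rpow hνS (one_div_nonneg.mpr hpq.symm.pos.le))
          _ = A ^ (1/p1) * (ENNReal.ofReal (c2 * R^t)) ^ (1 - 1/p1) := by rw [hq]
    calc ∫⁻ y in S, f y ∂ν
        ≤ A ^ (1/p1) * (ENNReal.ofReal (c2 * R^t)) ^ (1 - 1/p1) := key
      _ = ENNReal.ofReal (KA * (c2 * R ^ t) ^ (1 - 1/p1)) := by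
          rw [hAofReal, ENNReal.ofReal_rpow_of_pos hc2R,
            ← ENNReal.ofReal_mul hKA.le]
  -- lower bound
  have lower : ∀ x ∈ X, ∀ r : ℝ, 0 < r → r < 1 →
      ENNReal.ofReal ((c1 * r ^ s) ^ (1 + 1/p2) / KB) ≤
        ∫⁻ y in closedBall x r ∩ X, f y ∂ν := by
    intro x hx r hr hr1
    set S := closedBall x r ∩ X with hSdef
    have hSX : S ⊆ X := inter_subset_right
    set I := ∫⁻ y in S, f y ∂ν with hIdef
    have hp2ne : p2 ≠ 0 := hp2'.ne'
    have hp2p1 : p2 + 1 ≠ 0 := by positivity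
    set α := p2 / (p2 + 1) with hαdef
    have hα : 0 < α := by positivity
    set P := (p2 + 1) / p2 with hPdef
    set Q := p2 + 1 with hQdef
    have hpq : P.HolderConjugate Q := by
      rw [Real.holderConjugate_iff]
      constructor
      · simp only [hPdef, hQdef]
        rw [lt_div_iff₀ hp2']; linarith
      · simp only [hPdef, hQdef]; field_simp
    have hmono : ν.restrict S ≤ ν.restrict X := Measure.restrict_mono hSX le_rfl
    have hpos' : ∀ᵐ y ∂ν.restrict S, 0 < f y := hpos.filter_mono (ae_mono hmono)
    have hfin' : ∀ᵐ y ∂ν.restrict S, f y < ∞ := hfin.filter_mono (ae_mono hmono)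
    have heq : (fun y => f y ^ α * f y ^ (-α)) =ᵐ[ν.restrict S] (fun _ => (1:ℝ≥0∞)) := by
      filter_upwards [hpos', hfin'] with y h0 htop
      rw [← ENNReal.rpow_add α (-α) h0.ne' htop.ne]
      simp
    have hν1 : ν S ≤ I ^ α * B ^ (1/Q) := by
      have hold := ENNReal.lintegral_mul_le_Lp_mul_Lq (ν.restrict S) hpq
        (hf.pow_const α).aemeasurable (hf.pow_const (-α)).aemeasurable
      have hL : (∫⁻ y, ((fun y => f y ^ α) * fun y => f y ^ (-α)) y ∂ν.restrict S) = ν S := by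
        simp only [Pi.mul_apply]
        rw [lintegral_congr_ae heq]
        simp [Measure.restrict_apply MeasurableSet.univ]
      have hαP : α * P = 1 := by simp only [hαdef, hPdef, hQdef]; field_simp
      have hαQ : -α * Q = -p2 := by simp only [hαdef, hQdef]; field_simp
      have hR1' : (∫⁻ y in S, (f y ^ α) ^ P ∂ν) = I := by
        rw [hIdef]; apply lintegral_congr; intro y
        rw [← ENNReal.rpow_mul, hαP, ENNReal.rpow_one]
      have hR2' : (∫⁻ y in S, (f y ^ (-α)) ^ Q ∂ν) ≤ B := by
        have : (∫⁻ y in S, (f y ^ (-α)) ^ Q ∂ν) = ∫⁻ y in S, f y ^ (-p2) ∂ν := by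
          apply lintegral_congr; intro y
          rw [← ENNReal.rpow_mul, hαQ]
        rw [this, hBdef]
        exact lintegral_mono_set hSX
      rw [hL, hR1'] at hold
      have h1P : 1/P = α := by simp only [hαdef, hPdef, hQdef]; rw [one_div_div]
      calc ν S ≤ I ^ (1/P) * (∫⁻ y in S, (f y ^ (-α)) ^ Q ∂ν) ^ (1/Q) := hold
        _ ≤ I ^ (1/P) * B ^ (1/Q) :=
            mul_le_mul_right
              (ENNReal.rpow_le_rpow hR2' (one_div_nonneg.mpr hpq.symm.pos.le)) _
        _ = I ^ α * B ^ (1/Q) := by rw [h1P]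
    have hc1r : (0:ℝ) < c1 * r ^ s := by positivity
    have step : ENNReal.ofReal (c1 * r ^ s) ≤ I ^ α * B ^ (1/Q) :=
      le_trans (hν x hx r hr hr1).1 hν1
    have step2 : ENNReal.ofReal ((c1 * r ^ s) ^ (1 + 1/p2)) ≤ I * B ^ (1/p2) := by
      have h := ENNReal.rpow_le_rpow step (le_of_lt (by positivity : (0:ℝ) < 1/α))
      rw [ENNReal.mul_rpow_of_nonneg _ _ (by positivity : (0:ℝ) ≤ 1/α),
        ← ENNReal.rpow_mul I, ← ENNReal.rpow_mul B] at h
      have hαα : α * (1/α) = 1 := by simp only [hαdef, hQdef]; field_simp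
      have hQα : 1/Q * (1/α) = 1/p2 := by simp only [hαdef, hQdef]; rw [one_div_div]; field_simp
      have h1α : 1/α = 1 + 1/p2 := by simp only [hαdef, hQdef]; rw [one_div_div]; field_simp
      rw [hαα, hQα, ENNReal.rpow_one, ENNReal.ofReal_rpow_of_pos hc1r, h1α] at h
      exact h
    have hBne0 : B ^ (1/p2) ≠ 0 := hBpow_ne_zero
    have hBnetop : B ^ (1/p2) ≠ ∞ := hBpow_ne_top
    have := (ENNReal.div_le_iff hBne0 hBnetop).mpr step2
    rwa [hBofReal, ← ENNReal.ofReal_div_of_pos hKB] at this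
  -- final assembly
  refine ⟨KA * KB * c2 ^ (1 - 1/p1) / c1 ^ (1 + 1/p2), by positivity, ?_⟩
  intro x hx r R hr hrR hR1
  have hR : 0 < R := lt_of_lt_of_le hr hrR
  have hr1 : r < 1 := lt_of_le_of_lt hrR hR1
  have hLpos : (0:ℝ) < (c1 * r ^ s) ^ (1 + 1/p2) / KB := by positivity
  calc (∫⁻ y in closedBall x R ∩ X, f y ∂ν) / (∫⁻ y in closedBall x r ∩ X, f y ∂ν)
      ≤ ENNReal.ofReal (KA * (c2 * R ^ t) ^ (1 - 1/p1)) /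
          ENNReal.ofReal ((c1 * r ^ s) ^ (1 + 1/p2) / KB) :=
        ENNReal.div_le_div (upper x hx R hR hR1) (lower x hx r hr hr1)
    _ = ENNReal.ofReal ((KA * (c2 * R ^ t) ^ (1 - 1/p1)) /
          ((c1 * r ^ s) ^ (1 + 1/p2) / KB)) := (ENNReal.ofReal_div_of_pos hLpos).symm
    _ ≤ ENNReal.ofReal (KA * KB * c2 ^ (1 - 1/p1) / c1 ^ (1 + 1/p2) *
          R ^ (t * (1 - 1 / p1)) / r ^ (s * (1 + 1 / p2))) := by
        apply ENNReal.ofReal_le_ofReal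
        apply le_of_eq
        rw [Real.mul_rpow hc2.le (Real.rpow_nonneg hR.le t),
          Real.mul_rpow hc1.le (Real.rpow_nonneg hr.le s),
          ← Real.rpow_mul hR.le, ← Real.rpow_mul hr.le]
        have h1 : c1 ^ (1 + 1/p2) ≠ 0 := by positivity
        have h2 : r ^ (s * (1 + 1/p2)) ≠ 0 := by positivity
        have h3 : KB ≠ 0 := hKB.ne'
        field_simp
end
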